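/- Let $\theta > k \ge 1$, $L > 1$, and let $\{X^j\}$ be the points $X^j = L q^j$ for $q^j$ the integer points of $[0,m]^k \times \{0\} \subset \mathbb{R}^n$, with $m \ge 8$. Let $\Omega_i$ be the Voronoi cell of $X^i$. Then there is $C = C(\theta,k,n) > 1$, independent of $m$ and $L$, such that for $y \in \Omega_i$ with $L \le |y - X^i| \le \frac{m}{4}L$: $$\frac{1}{C(1+|y-X^i|)^{\theta-k} L^k} \le \sum_j \frac{1}{(1+|y-X^j|)^{\theta}} \le \frac{C}{(1+|y-X^i|)^{\theta-k} L^k}.$$ -/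

import Mathlib

open Real

open Finset

set_option maxHeartbeats 1000000


/-- natural distance -/
def nd (a b : ℕ) : ℕ := (a - b) + (b - a)

lemma nd_cast (a b : ℕ) : ((nd a b : ℕ) : ℝ) = |(a:ℝ) - (b:ℝ)| := by
  unfold nd
  rcases le_total a b with h | h
  · have hba : (a:ℝ) ≤ b := by exact_mod_cast h
    rw [abs_sub_comm, abs_of_nonneg (by linarith)]
    push_cast [h, Nat.sub_eq_zero_of_le h]
    ring
  · have hba : (b:ℝ) ≤ a := by exact_mod_cast h
    rw [abs_of_nonneg (by linarith)]
    push_cast [h, Nat.sub_eq_zero_of_le h]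
    ring

lemma coord_le_dist {n : ℕ} (x y : EuclideanSpace ℝ (Fin n)) (i : Fin n) :
    dist (x i) (y i) ≤ dist x y := by
  rw [EuclideanSpace.dist_eq]
  have h1 : dist (x i) (y i) = Real.sqrt (dist (x i) (y i) ^ 2) := by
    rw [Real.sqrt_sq dist_nonneg]
  rw [h1]
  apply Real.sqrt_le_sqrt
  exact Finset.single_le_sum (f := fun j => dist (x j) (y j) ^ 2)
    (fun j _ => sq_nonneg _) (mem_univ i)

lemma dist_le_of_coords {n : ℕ} (x y : EuclideanSpace ℝ (Fin n)) (B : ℝ) (hB : 0 ≤ B)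
    (h : ∀ i, dist (x i) (y i) ≤ B) : dist x y ≤ Real.sqrt n * B := by
  rw [EuclideanSpace.dist_eq]
  have hsum : ∑ i : Fin n, dist (x i) (y i) ^ 2 ≤ ∑ _i : Fin n, B ^ 2 :=
    Finset.sum_le_sum fun i _ => pow_le_pow_left₀ dist_nonneg (h i) 2
  calc Real.sqrt (∑ i : Fin n, dist (x i) (y i) ^ 2) ≤ Real.sqrt (n * B ^ 2) := by
        apply Real.sqrt_le_sqrt; simpa using hsum
    _ = Real.sqrt n * B := by
        rw [Real.sqrt_mul (Nat.cast_nonneg n), Real.sqrt_sq hB]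

lemma card_interval {m c t : ℕ} :
    (Finset.univ.filter (fun a : Fin (m+1) => nd (a:ℕ) c ≤ t)).card ≤ 2*t+1 := by
  have h := Finset.card_le_card_of_injOn (f := fun a : Fin (m+1) => (a:ℕ) + t - c)
    (s := Finset.univ.filter (fun a : Fin (m+1) => nd (a:ℕ) c ≤ t))
    (t := Finset.range (2*t+1)) ?_ ?_
  · simpa using h
  · intro a ha
    simp only [Finset.mem_coe, mem_filter, mem_univ, true_and] at ha
    simp only [Finset.mem_coe, mem_range]
    unfold nd at ha; omega
  · intro a ha b hb hab
    rw [Finset.mem_coe, Finset.mem_filter] at ha hb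
    have hab' : (a:ℕ) + t - c = (b:ℕ) + t - c := hab
    unfold nd at ha hb
    exact Fin.ext (by omega)

lemma card_box {k m : ℕ} (qi : Fin k → Fin (m+1)) (t : ℕ) :
    (Finset.univ.filter (fun q : Fin k → Fin (m+1) => ∀ l, nd (q l) (qi l) ≤ t)).card
      ≤ (2*t+1)^k := by
  have hsub : (Finset.univ.filter (fun q : Fin k → Fin (m+1) => ∀ l, nd (q l) (qi l) ≤ t))
      ⊆ Fintype.piFinset (fun l => Finset.univ.filter (fun a : Fin (m+1) => nd (a:ℕ) (qi l) ≤ t)) := by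
    intro q hq
    simp only [mem_filter, mem_univ, true_and] at hq
    rw [Fintype.mem_piFinset]
    intro l
    simp only [mem_filter, mem_univ, true_and]
    exact hq l
  calc _ ≤ _ := Finset.card_le_card hsub
    _ = ∏ l : Fin k, (Finset.univ.filter (fun a : Fin (m+1) => nd (a:ℕ) (qi l) ≤ t)).card :=
        Fintype.card_piFinset _
    _ ≤ ∏ _l : Fin k, (2*t+1) := Finset.prod_le_prod' fun l _ => card_interval
    _ = (2*t+1)^k := by simp

lemma step_real {p a : ℝ} (hp : 1 < p) (ha1 : 1 ≤ a) :
    a^(-p) ≤ (2:ℝ)^p / (p-1) * (a^(1-p) - (a+1)^(1-p)) := by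
  have ha0 : 0 < a := by linarith
  have hb0 : (0:ℝ) < a + 1 := by linarith
  have hba : (0:ℝ) < (a+1) / a := by positivity
  have hlog : (a+1)⁻¹ ≤ Real.log ((a+1)/a) := by
    have h1 : Real.log (a/(a+1)) ≤ a/(a+1) - 1 := Real.log_le_sub_one_of_pos (by positivity)
    have h2 : Real.log (a/(a+1)) = - Real.log ((a+1)/a) := by
      rw [Real.log_div ha0.ne' hb0.ne', Real.log_div hb0.ne' ha0.ne']; ring
    have h3 : a/(a+1) - 1 = -((a+1)⁻¹) := by field_simp; ring
    rw [h2, h3] at h1; linarith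
  have hA : 1 + (p-1)/(a+1) ≤ ((a+1)/a)^(p-1) := by
    have e1 : (p-1)/(a+1) + 1 ≤ Real.exp ((p-1)/(a+1)) := Real.add_one_le_exp _
    have e2 : Real.exp ((p-1)/(a+1)) ≤ Real.exp (Real.log ((a+1)/a) * (p-1)) := by
      apply Real.exp_le_exp.2
      rw [mul_comm, div_eq_mul_inv]
      exact mul_le_mul_of_nonneg_left hlog (by linarith)
    rw [Real.rpow_def_of_pos hba]
    linarith
  have hbp : (0:ℝ) < (a+1)^(1-p) := Real.rpow_pos_of_pos hb0 _
  have hap : (0:ℝ) < a^(p-1) := Real.rpow_pos_of_pos ha0 _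
  have hsplit : (a+1)^(1-p) = (a+1) * (a+1)^(-p) := by
    have h1 : (1:ℝ) - p = 1 + -p := by ring
    rw [h1, Real.rpow_add hb0, Real.rpow_one]
  have e1 : ((a+1):ℝ)^(p-1) * (a+1)^(1-p) = 1 := by
    rw [← Real.rpow_add hb0]; norm_num
  have e2 : a^(p-1) * a^(1-p) = 1 := by
    rw [← Real.rpow_add ha0]; norm_num
  have hB : (a+1)^(1-p) + (p-1) * (a+1)^(-p) ≤ a^(1-p) := by
    have hm := mul_le_mul_of_nonneg_right hA hbp.le
    have lhs : (1 + (p-1)/(a+1)) * (a+1)^(1-p) = (a+1)^(1-p) + (p-1) * (a+1)^(-p) := by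
      rw [hsplit]; field_simp
    have rhs : ((a+1)/a)^(p-1) * (a+1)^(1-p) = a^(1-p) := by
      rw [Real.div_rpow hb0.le ha0.le, div_mul_eq_mul_div, e1, eq_comm,
        eq_div_iff hap.ne', mul_comm]
      exact e2
    rw [lhs, rhs] at hm
    exact hm
  have h2pos : (0:ℝ) < (2:ℝ)^p := Real.rpow_pos_of_pos (by norm_num) _
  have hab2 : a^(-p) ≤ (2:ℝ)^p * (a+1)^(-p) := by
    have h2a : a + 1 ≤ 2*a := by linarith
    have hmono : (2*a)^(-p) ≤ (a+1)^(-p) := Real.rpow_le_rpow_of_nonpos hb0 h2a (by linarith)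
    have hm : (2*a)^(-p) = (2:ℝ)^(-p) * a^(-p) := Real.mul_rpow (by norm_num) ha0.le
    have h2p : ((2:ℝ)^(-p) : ℝ) = ((2:ℝ)^p)⁻¹ := Real.rpow_neg (by norm_num) p
    rw [hm, h2p] at hmono
    calc a^(-p) = (2:ℝ)^p * (((2:ℝ)^p)⁻¹ * a^(-p)) := by field_simp
      _ ≤ (2:ℝ)^p * (a+1)^(-p) := mul_le_mul_of_nonneg_left hmono h2pos.le
  calc a^(-p) ≤ (2:ℝ)^p * (a+1)^(-p) := hab2
    _ ≤ (2:ℝ)^p / (p-1) * (a^(1-p) - (a+1)^(1-p)) := by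
        rw [div_mul_eq_mul_div, le_div_iff₀ (by linarith)]
        nlinarith [hB]

lemma tail_sum {p : ℝ} (hp : 1 < p) (N M : ℕ) (hN : 1 ≤ N) :
    ∑ t ∈ Finset.Ico N M, ((t:ℝ))^(-p) ≤ (2:ℝ)^p/(p-1) * (N:ℝ)^(1-p) := by
  have hc : (0:ℝ) ≤ (2:ℝ)^p/(p-1) :=
    div_nonneg (Real.rpow_nonneg (by norm_num) _) (by linarith)
  have hstep : ∀ t ∈ Finset.Ico N M, ((t:ℝ))^(-p) ≤
      (2:ℝ)^p/(p-1) * (((t:ℝ))^(1-p) - (((t+1:ℕ)):ℝ)^(1-p)) := by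
    intro t ht
    have ht1 : 1 ≤ t := le_trans hN (Finset.mem_Ico.1 ht).1
    have h := step_real hp (show (1:ℝ) ≤ (t:ℝ) by exact_mod_cast ht1)
    have hcast : (((t+1:ℕ)):ℝ) = (t:ℝ) + 1 := by push_cast; ring
    rw [hcast]
    exact h
  calc ∑ t ∈ Finset.Ico N M, ((t:ℝ))^(-p)
      ≤ ∑ t ∈ Finset.Ico N M, (2:ℝ)^p/(p-1) * (((t:ℝ))^(1-p) - (((t+1:ℕ)):ℝ)^(1-p)) :=
        Finset.sum_le_sum hstep
    _ = (2:ℝ)^p/(p-1) * ∑ t ∈ Finset.Ico N M, (((t:ℝ))^(1-p) - (((t+1:ℕ)):ℝ)^(1-p)) := by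
        rw [Finset.mul_sum]
    _ ≤ (2:ℝ)^p/(p-1) * (N:ℝ)^(1-p) := by
        apply mul_le_mul_of_nonneg_left _ hc
        rw [Finset.sum_Ico_eq_sum_range]
        have htel := Finset.sum_range_sub' (fun i => (((N+i:ℕ)):ℝ)^(1-p)) (M-N)
        simp only [Nat.add_zero] at htel
        calc ∑ i ∈ Finset.range (M-N), ((((N+i:ℕ)):ℝ)^(1-p) - (((N+i+1:ℕ)):ℝ)^(1-p))
            = (((N:ℕ)):ℝ)^(1-p) - (((N+(M-N):ℕ)):ℝ)^(1-p) := htel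
          _ ≤ (N:ℝ)^(1-p) := by
              have : (0:ℝ) ≤ (((N+(M-N):ℕ)):ℝ)^(1-p) := Real.rpow_nonneg (by positivity) _
              linarith

lemma val_le_tail {θ : ℝ} (hθ0 : 0 < θ) {s0 N M : ℕ} (h1 : 1 ≤ s0) (hN : N ≤ s0) (hM : 2*s0 ≤ M) :
    ((s0:ℝ))^(-θ) ≤ (2:ℝ)^(θ+1) *
      ∑ t ∈ Finset.Ico N M, (if s0 ≤ t then ((t:ℝ))^(-(θ+1)) else 0) := by
  have hs0 : (0:ℝ) < (s0:ℝ) := by exact_mod_cast h1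
  have h2s0 : (0:ℝ) < 2*(s0:ℝ) := by linarith
  have hstep1 : ((s0:ℕ):ℝ) * (2*(s0:ℝ))^(-(θ+1)) ≤
      ∑ t ∈ Finset.Ico s0 (2*s0), ((t:ℝ))^(-(θ+1)) := by
    have hcard : (Finset.Ico s0 (2*s0)).card = s0 := by
      rw [Nat.card_Ico]; omega
    have := Finset.card_nsmul_le_sum (Finset.Ico s0 (2*s0))
      (fun t => ((t:ℝ))^(-(θ+1))) ((2*(s0:ℝ))^(-(θ+1))) ?_
    · rw [hcard, nsmul_eq_mul] at this
      exact this
    · intro t ht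
      rw [Finset.mem_Ico] at ht
      have ht0 : (0:ℝ) < (t:ℝ) := by
        have : 1 ≤ t := le_trans h1 ht.1
        exact_mod_cast this
      apply Real.rpow_le_rpow_of_nonpos ht0 _ (by linarith)
      have : (t:ℝ) ≤ 2*(s0:ℝ) := by exact_mod_cast le_of_lt ht.2
      exact this
  have hsub : ∑ t ∈ Finset.Ico s0 (2*s0), ((t:ℝ))^(-(θ+1)) ≤
      ∑ t ∈ Finset.Ico N M, (if s0 ≤ t then ((t:ℝ))^(-(θ+1)) else 0) := by
    calc ∑ t ∈ Finset.Ico s0 (2*s0), ((t:ℝ))^(-(θ+1))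
        = ∑ t ∈ Finset.Ico s0 (2*s0), (if s0 ≤ t then ((t:ℝ))^(-(θ+1)) else 0) := by
          refine Finset.sum_congr rfl fun t ht => ?_
          rw [if_pos (Finset.mem_Ico.1 ht).1]
      _ ≤ _ := by
          apply Finset.sum_le_sum_of_subset_of_nonneg
          · apply Finset.Ico_subset_Ico hN hM
          · intro t _ _
            split
            · positivity
            · exact le_rfl
  have hkey : ((s0:ℝ))^(-θ) = (2:ℝ)^(θ+1) * (((s0:ℕ):ℝ) * (2*(s0:ℝ))^(-(θ+1))) := by
    rw [Real.mul_rpow (by norm_num) hs0.le]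
    have h2 : (2:ℝ)^(θ+1) * (2:ℝ)^(-(θ+1)) = 1 := by
      have he : θ+1+(-(θ+1)) = 0 := by ring
      rw [← Real.rpow_add (by norm_num), he, Real.rpow_zero]
    have hs : (s0:ℝ) * (s0:ℝ)^(-(θ+1)) = (s0:ℝ)^(-θ) := by
      have he : (1:ℝ)+(-(θ+1)) = -θ := by ring
      nth_rewrite 1 [← Real.rpow_one (s0:ℝ)]
      rw [← Real.rpow_add hs0, he]
    calc ((s0:ℝ))^(-θ) = ((2:ℝ)^(θ+1) * (2:ℝ)^(-(θ+1))) * ((s0:ℝ) * (s0:ℝ)^(-(θ+1))) := by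
          rw [h2, hs]; ring
      _ = _ := by ring
  rw [hkey]
  have h2p : (0:ℝ) ≤ (2:ℝ)^(θ+1) := Real.rpow_nonneg (by norm_num) _
  exact mul_le_mul_of_nonneg_left (le_trans hstep1 hsub) h2p

/-- The scaled lattice point of `ℝ^n` associated to `q : Fin k → Fin (m+1)` and spacing `L`:
its first `k` coordinates are `L * q i` and the remaining ones vanish. -/
noncomputable def latticePt (n k m : ℕ) (L : ℝ) (q : Fin k → Fin (m + 1)) :
    EuclideanSpace ℝ (Fin n) :=
  WithLp.toLp 2 fun i => if h : (i : ℕ) < k then L * ((q ⟨i, h⟩ : ℕ) : ℝ) else 0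

lemma latticePt_apply {n k m : ℕ} (hkn : k ≤ n) (L : ℝ) (q : Fin k → Fin (m+1)) (l : Fin k) :
    latticePt n k m L q ⟨l.1, lt_of_lt_of_le l.2 hkn⟩ = L * ((q l : ℕ) : ℝ) := by
  simp [latticePt, l.2]

lemma dist_latticePt_coord {n k m : ℕ} (hkn : k ≤ n) {L : ℝ} (hL : 0 ≤ L)
    (q q' : Fin k → Fin (m+1)) (l : Fin k) :
    L * ((nd (q l) (q' l) : ℕ) : ℝ) ≤ dist (latticePt n k m L q) (latticePt n k m L q') := by
  have h := coord_le_dist (latticePt n k m L q) (latticePt n k m L q')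
    ⟨l.1, lt_of_lt_of_le l.2 hkn⟩
  rw [latticePt_apply hkn, latticePt_apply hkn, Real.dist_eq] at h
  calc L * ((nd (q l) (q' l) : ℕ) : ℝ) = |L * (q l : ℕ) - L * (q' l : ℕ)| := by
        rw [nd_cast, ← mul_sub, abs_mul, abs_of_nonneg hL]
    _ ≤ _ := h

lemma dist_latticePt_le {n k m : ℕ} {L : ℝ} (hL : 0 ≤ L)
    (q q' : Fin k → Fin (m+1)) (s : ℕ) (h : ∀ l, nd (q l) (q' l) ≤ s) :
    dist (latticePt n k m L q) (latticePt n k m L q') ≤ Real.sqrt n * (L * s) := by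
  apply dist_le_of_coords _ _ _ (by positivity)
  intro i
  rw [Real.dist_eq]
  by_cases hik : (i : ℕ) < k
  · simp only [latticePt, PiLp.toLp_apply, dif_pos hik]
    rw [← mul_sub, abs_mul, abs_of_nonneg hL, ← nd_cast]
    have h2 : ((nd (q ⟨i, hik⟩) (q' ⟨i, hik⟩) : ℕ) : ℝ) ≤ (s : ℕ) := by
      exact_mod_cast h ⟨i, hik⟩
    nlinarith
  · simp only [latticePt, PiLp.toLp_apply, dif_neg hik]
    simp
    positivity

theorem stmt_12 {n k : ℕ} (θ : ℝ) (hk : 1 ≤ k) (hkn : k ≤ n) (hθ : (k : ℝ) < θ) :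
    ∃ C : ℝ, 1 < C ∧ ∀ m : ℕ, 8 ≤ m → ∀ L : ℝ, 1 < L →
      ∀ qi : Fin k → Fin (m + 1), ∀ y : EuclideanSpace ℝ (Fin n),
        (∀ qj : Fin k → Fin (m + 1),
          dist y (latticePt n k m L qi) ≤ dist y (latticePt n k m L qj)) →
        L ≤ dist y (latticePt n k m L qi) →
        dist y (latticePt n k m L qi) ≤ ((m : ℝ) / 4) * L →
        1 / (C * (1 + dist y (latticePt n k m L qi)) ^ (θ - k) * L ^ (k : ℝ)) ≤
          (∑ qj : Fin k → Fin (m + 1), 1 / (1 + dist y (latticePt n k m L qj)) ^ θ) ∧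
        (∑ qj : Fin k → Fin (m + 1), 1 / (1 + dist y (latticePt n k m L qj)) ^ θ) ≤
          C / ((1 + dist y (latticePt n k m L qi)) ^ (θ - k) * L ^ (k : ℝ)) := by
  have hk1 : (1:ℝ) ≤ (k:ℝ) := by exact_mod_cast hk
  have hθ0 : (0:ℝ) < θ := by linarith
  have hθk : (0:ℝ) < θ - k := by linarith
  have hn1 : 1 ≤ n := le_trans hk hkn
  have hsqn : (1:ℝ) ≤ Real.sqrt n := by
    rw [show (1:ℝ) = Real.sqrt 1 by simp]
    exact Real.sqrt_le_sqrt (by exact_mod_cast hn1)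
  have hsqn0 : (0:ℝ) ≤ Real.sqrt n := by linarith
  set Cl : ℝ := 2^(k:ℕ) * (1 + Real.sqrt n)^θ with hCl
  set Cu : ℝ := (10:ℝ)^(k:ℕ) + (2:ℝ)^(4*θ+2) * 3^(k:ℕ) / (θ - k) with hCu
  have hCl0 : 0 < Cl := by positivity
  have hCu0 : 0 < Cu := by positivity
  refine ⟨1 + Cl + Cu, by linarith, ?_⟩
  intro m hm L hL qi y hvor hlow hup
  set C : ℝ := 1 + Cl + Cu with hC
  have hC0 : 0 < C := by positivity
  have hL0 : (0:ℝ) < L := by linarith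
  have hL1 : (1:ℝ) ≤ L := hL.le
  set Xi := latticePt n k m L qi with hXi
  set d := dist y Xi with hd
  have hd1 : (1:ℝ) ≤ d := le_trans hL1 hlow
  have hd0 : (0:ℝ) < d := by linarith
  set D := 1 + d with hD
  have hD0 : (0:ℝ) < D := by rw [hD]; linarith
  have hD2d : D ≤ 2*d := by rw [hD]; linarith
  have hDθ : (0:ℝ) < D^θ := Real.rpow_pos_of_pos hD0 _
  have hLk : (0:ℝ) < L^(k:ℕ) := by positivity
  have hDk : (0:ℝ) < D^(k:ℕ) := by positivity
  set G : ℝ := (D:ℝ)^(k:ℕ) / (D^θ * L^(k:ℕ)) with hG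
  have hG0 : 0 < G := by positivity
  -- conversion of the target denominator
  have hEG : 1/(D^(θ - (k:ℝ)) * L^((k:ℕ):ℝ)) = G := by
    rw [Real.rpow_sub hD0, Real.rpow_natCast, Real.rpow_natCast, hG]
    field_simp
  have hdL1 : (1:ℝ) ≤ d / L := (one_le_div hL0).2 hlow
  have hdL0 : (0:ℝ) < d / L := by linarith
  set s0 := ⌊d / L⌋₊ with hs0
  have hs01 : 1 ≤ s0 := Nat.le_floor (by exact_mod_cast hdL1)
  have hs0le : (s0:ℝ) ≤ d / L := Nat.floor_le (by positivity)
  have hdm4 : d / L ≤ (m:ℝ)/4 := by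
    rw [div_le_div_iff₀ hL0 (by norm_num)]
    calc d * 4 ≤ ((m:ℝ)/4 * L) * 4 := by linarith
      _ = (m:ℝ) * L := by ring
  have h4s0 : 4 * s0 ≤ m := by
    have h1 : (4 * s0 : ℝ) ≤ (m:ℝ) := by
      have h2 := le_trans hs0le hdm4
      push_cast
      linarith
    exact_mod_cast h1
  set φ : (Fin k → Fin (s0+1)) → (Fin k → Fin (m+1)) := fun v l =>
    if _h : 2*(qi l : ℕ) ≤ m then
      ⟨(qi l : ℕ) + (v l : ℕ), by have := Fin.is_le (v l); omega⟩
    else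
      ⟨(qi l : ℕ) - (v l : ℕ), by have := Fin.is_lt (qi l); omega⟩
    with hφ
  have hφd : ∀ v l, nd ((φ v l : ℕ)) (qi l) = (v l : ℕ) := by
    intro v l
    have h1 := Fin.is_le (v l)
    simp only [hφ]
    split_ifs with h
    · simp only [Fin.val_mk]
      unfold nd; omega
    · simp only [Fin.val_mk]
      unfold nd; omega
  have hφinj : Function.Injective φ := by
    intro v w hvw
    funext l
    have h1 := hφd v l
    have h2 := hφd w l
    rw [hvw] at h1
    exact Fin.ext (h1.symm.trans h2)
  have hLs0d : L * (s0:ℝ) ≤ d := by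
    calc L * (s0:ℝ) ≤ L * (d/L) := mul_le_mul_of_nonneg_left hs0le hL0.le
      _ = d := by field_simp
  have hterm : ∀ v : Fin k → Fin (s0+1),
      1/((1 + Real.sqrt n)*D)^θ ≤ 1/(1 + dist y (latticePt n k m L (φ v)))^θ := by
    intro v
    have hdist : dist Xi (latticePt n k m L (φ v)) ≤ Real.sqrt n * (L * s0) := by
      rw [hXi, dist_comm]
      exact dist_latticePt_le hL0.le (φ v) qi s0
        (fun l => by rw [hφd]; exact Fin.is_le _)
    have htri : dist y (latticePt n k m L (φ v)) ≤ d + Real.sqrt n * d := by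
      calc dist y (latticePt n k m L (φ v))
          ≤ dist y Xi + dist Xi (latticePt n k m L (φ v)) := dist_triangle _ _ _
        _ ≤ d + Real.sqrt n * (L * s0) := by
            have : dist y Xi = d := hd.symm
            linarith
        _ ≤ d + Real.sqrt n * d := by
            have := mul_le_mul_of_nonneg_left hLs0d hsqn0
            linarith
    have hb : 1 + dist y (latticePt n k m L (φ v)) ≤ (1 + Real.sqrt n) * D := by
      rw [hD]
      have hexp : (1 + Real.sqrt n) * (1 + d) = 1 + d + Real.sqrt n + Real.sqrt n * d := by ring
      rw [hexp]
      linarith [htri]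
    apply one_div_le_one_div_of_le
    · exact Real.rpow_pos_of_pos (by positivity) θ
    · exact Real.rpow_le_rpow (by positivity) hb hθ0.le
  have hlower : G / Cl ≤ ∑ qj : Fin k → Fin (m+1), 1/(1 + dist y (latticePt n k m L qj))^θ := by
    have hnn : (0:ℝ) < ((1 + Real.sqrt n)*D)^θ := Real.rpow_pos_of_pos (by positivity) θ
    have himg : ∑ qj ∈ Finset.image φ Finset.univ, 1/(1 + dist y (latticePt n k m L qj))^θ
        ≤ ∑ qj : Fin k → Fin (m+1), 1/(1 + dist y (latticePt n k m L qj))^θ := by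
      apply Finset.sum_le_sum_of_subset_of_nonneg (Finset.subset_univ _)
      intro q _ _
      positivity
    have hcard : (Finset.image φ Finset.univ).card = (s0+1)^k := by
      rw [Finset.card_image_of_injective _ hφinj, Finset.card_univ, Fintype.card_fun]
      simp
    have hmin := Finset.card_nsmul_le_sum (Finset.image φ Finset.univ)
      (fun qj => 1/(1 + dist y (latticePt n k m L qj))^θ) (1/((1 + Real.sqrt n)*D)^θ) ?_
    swap
    · intro q hq
      obtain ⟨v, _, rfl⟩ := Finset.mem_image.1 hq
      exact hterm v
    rw [hcard, nsmul_eq_mul] at hmin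
    have hs0d : D/(2*L) ≤ (((s0+1):ℕ):ℝ) := by
      have hfl : d / L < (s0:ℝ) + 1 := Nat.lt_floor_add_one (d/L)
      push_cast
      calc D/(2*L) = (D/2)/L := by ring
        _ ≤ d/L := by gcongr <;> linarith
        _ ≤ (s0:ℝ)+1 := hfl.le
    have hpow : (D/(2*L))^(k:ℕ) ≤ ((((s0+1):ℕ)):ℝ)^(k:ℕ) :=
      pow_le_pow_left₀ (by positivity) hs0d k
    calc G / Cl = (D/(2*L))^(k:ℕ) * (1/((1+Real.sqrt n)^θ * D^θ)) := by
          rw [hG, hCl, div_pow, mul_pow]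
          have h1 : ((1:ℝ)+Real.sqrt n)^θ ≠ 0 := by positivity
          field_simp
      _ ≤ ((((s0+1):ℕ)):ℝ)^(k:ℕ) * (1/((1+Real.sqrt n)^θ * D^θ)) := by
          apply mul_le_mul_of_nonneg_right hpow
          positivity
      _ = (((s0+1)^k : ℕ) : ℝ) * (1/((1 + Real.sqrt n)*D)^θ) := by
          rw [Real.mul_rpow (by positivity) hD0.le]
          push_cast
          ring
      _ ≤ ∑ qj ∈ Finset.image φ Finset.univ, 1/(1 + dist y (latticePt n k m L qj))^θ := hmin
      _ ≤ _ := himg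
  -- upper bound
  set sfun : (Fin k → Fin (m+1)) → ℕ := fun q => Finset.univ.sup (fun l => nd (q l) (qi l))
    with hsfun
  have hsle : ∀ (q : Fin k → Fin (m+1)) (t : ℕ), sfun q ≤ t ↔ ∀ l, nd (q l) (qi l) ≤ t := by
    intro q t
    simp [hsfun, Finset.sup_le_iff]
  have hsm : ∀ q : Fin k → Fin (m+1), sfun q ≤ m := by
    intro q
    rw [hsle]
    intro l
    have h1 := Fin.is_le (q l)
    have h2 := Fin.is_le (qi l)
    unfold nd; omega
  have hcount : ∀ t : ℕ,
      (Finset.univ.filter (fun q : Fin k → Fin (m+1) => sfun q ≤ t)).card ≤ (2*t+1)^k := by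
    intro t
    have he : Finset.univ.filter (fun q : Fin k → Fin (m+1) => sfun q ≤ t)
        = Finset.univ.filter (fun q : Fin k → Fin (m+1) => ∀ l, nd (q l) (qi l) ≤ t) := by
      apply Finset.filter_congr
      intro q _
      simp [hsle]
    rw [he]
    exact card_box qi t
  have hdistlow : ∀ q : Fin k → Fin (m+1),
      L * (sfun q : ℝ) ≤ dist Xi (latticePt n k m L q) := by
    intro q
    have hne : (Finset.univ : Finset (Fin k)).Nonempty := by
      have : Nonempty (Fin k) := ⟨⟨0, hk⟩⟩
      exact Finset.univ_nonempty
    obtain ⟨l, _, hl⟩ := Finset.exists_mem_eq_sup Finset.univ hne (fun l => nd (q l) (qi l))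
    have h1 := dist_latticePt_coord hkn hL0.le q qi l
    rw [hXi, dist_comm]
    calc L * (sfun q : ℝ) = L * ((nd (q l) (qi l) : ℕ) : ℝ) := by
          simp only [hsfun]
          rw [hl]
      _ ≤ _ := h1
  set s1 := ⌈d / L⌉₊ with hs1
  have hs1ge : d / L ≤ (s1:ℝ) := Nat.le_ceil _
  have hs11 : 1 ≤ s1 := by
    rw [hs1]
    exact Nat.one_le_ceil_iff.2 (by positivity)
  have hs1le : (s1:ℝ) ≤ 2*(d/L) := by
    have h1 := Nat.ceil_lt_add_one (show (0:ℝ) ≤ d/L by positivity)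
    rw [← hs1] at h1
    linarith
  have hds1 : d ≤ L * (s1:ℝ) := by
    rw [div_le_iff₀ hL0] at hs1ge
    linarith [hs1ge]
  set p : ℝ := θ + 1 - k with hp
  have hp1 : 1 < p := by rw [hp]; linarith
  set T := Finset.Ico (2*s1+1) (2*m+2) with hT
  have hsplit := Finset.sum_filter_add_sum_filter_not Finset.univ
    (fun q : Fin k → Fin (m+1) => sfun q ≤ 2*s1)
    (fun qj => 1/(1 + dist y (latticePt n k m L qj))^θ)
  have hnear : (∑ q ∈ Finset.univ.filter (fun q : Fin k → Fin (m+1) => sfun q ≤ 2*s1),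
      1/(1 + dist y (latticePt n k m L q))^θ) ≤ (10:ℝ)^(k:ℕ) * G := by
    have hb : ∀ q ∈ Finset.univ.filter (fun q : Fin k → Fin (m+1) => sfun q ≤ 2*s1),
        1/(1 + dist y (latticePt n k m L q))^θ ≤ 1/D^θ := by
      intro q _
      apply one_div_le_one_div_of_le hDθ
      apply Real.rpow_le_rpow hD0.le ?_ hθ0.le
      rw [hD]
      have := hvor q
      linarith
    have h1 := Finset.sum_le_card_nsmul _ _ _ hb
    have hs1R : (1:ℝ) ≤ (s1:ℝ) := by exact_mod_cast hs11
    have hdDL : d/L ≤ D/L := by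
      gcongr
      linarith
    have hcard2 : (((Finset.univ.filter
          (fun q : Fin k → Fin (m+1) => sfun q ≤ 2*s1)).card : ℕ) : ℝ)
        ≤ (10*D/L)^(k:ℕ) := by
      calc (((Finset.univ.filter
            (fun q : Fin k → Fin (m+1) => sfun q ≤ 2*s1)).card : ℕ) : ℝ)
          ≤ (((2*(2*s1)+1)^k : ℕ) : ℝ) := by exact_mod_cast hcount (2*s1)
        _ = (4*(s1:ℝ)+1)^(k:ℕ) := by push_cast; ring_nf
        _ ≤ (10*D/L)^(k:ℕ) := by
            apply pow_le_pow_left₀ (by positivity)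
            calc 4*(s1:ℝ)+1 ≤ 5*(s1:ℝ) := by linarith
              _ ≤ 10*(d/L) := by linarith
              _ ≤ 10*(D/L) := by linarith
              _ = 10*D/L := by ring
    calc (∑ q ∈ Finset.univ.filter (fun q : Fin k → Fin (m+1) => sfun q ≤ 2*s1),
          1/(1 + dist y (latticePt n k m L q))^θ)
        ≤ (Finset.univ.filter (fun q : Fin k → Fin (m+1) => sfun q ≤ 2*s1)).card
            • (1/D^θ) := h1
      _ = (((Finset.univ.filter
            (fun q : Fin k → Fin (m+1) => sfun q ≤ 2*s1)).card : ℕ) : ℝ) * (1/D^θ) :=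
          nsmul_eq_mul _ _
      _ ≤ (10*D/L)^(k:ℕ) * (1/D^θ) := by
          apply mul_le_mul_of_nonneg_right hcard2 (by positivity)
      _ = (10:ℝ)^(k:ℕ) * G := by
          rw [hG, div_pow, mul_pow]
          field_simp
  have hfar : (∑ q ∈ Finset.univ.filter (fun q : Fin k → Fin (m+1) => ¬ sfun q ≤ 2*s1),
      1/(1 + dist y (latticePt n k m L q))^θ) ≤ (2:ℝ)^(4*θ+2) * 3^(k:ℕ)/(θ-k) * G := by
    set F := Finset.univ.filter (fun q : Fin k → Fin (m+1) => ¬ sfun q ≤ 2*s1) with hF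
    have hFs : ∀ q ∈ F, 2*s1+1 ≤ sfun q := by
      intro q hq
      rw [hF, Finset.mem_filter] at hq
      omega
    have hsq0 : ∀ q ∈ F, (0:ℝ) < (sfun q : ℝ) := by
      intro q hq
      have h1 := hFs q hq
      have h2 : 1 ≤ sfun q := by omega
      exact_mod_cast h2
    have hpt : ∀ q ∈ F, 1/(1 + dist y (latticePt n k m L q))^θ
        ≤ (2:ℝ)^θ * L^(-θ) * ((sfun q : ℝ))^(-θ) := by
      intro q hq
      have hs2 : 2*(s1:ℝ) ≤ (sfun q : ℝ) := by
        have h1 := hFs q hq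
        have h2 : 2*s1 ≤ sfun q := by omega
        exact_mod_cast h2
      have hsq := hsq0 q hq
      have h2d : 2*d ≤ L * (sfun q : ℝ) := by
        calc 2*d ≤ 2*(L*(s1:ℝ)) := by linarith
          _ = L * (2*(s1:ℝ)) := by ring
          _ ≤ L * (sfun q:ℝ) := mul_le_mul_of_nonneg_left hs2 hL0.le
      have hdist : L * (sfun q : ℝ) - d ≤ dist y (latticePt n k m L q) := by
        have h1 := hdistlow q
        have h2 := dist_triangle Xi y (latticePt n k m L q)
        rw [dist_comm Xi y] at h2
        have h3 : dist y Xi = d := hd.symm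
        linarith
      have hdd : L * (sfun q:ℝ)/2 ≤ 1 + dist y (latticePt n k m L q) := by
        have h1 : L * (sfun q:ℝ)/2 ≤ L * (sfun q:ℝ) - d := by linarith
        have h2 : (0:ℝ) ≤ dist y (latticePt n k m L q) := dist_nonneg
        linarith
      have hpos : (0:ℝ) < L * (sfun q:ℝ)/2 := by positivity
      have h3 := Real.rpow_le_rpow hpos.le hdd hθ0.le
      have h4 : 1/(1 + dist y (latticePt n k m L q))^θ ≤ 1/(L * (sfun q:ℝ)/2)^θ :=
        one_div_le_one_div_of_le (Real.rpow_pos_of_pos hpos θ) h3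
      have hLθ : (0:ℝ) < L^θ := Real.rpow_pos_of_pos hL0 θ
      have hsθ : (0:ℝ) < (sfun q:ℝ)^θ := Real.rpow_pos_of_pos hsq θ
      have h2θ : (0:ℝ) < (2:ℝ)^θ := Real.rpow_pos_of_pos (by norm_num) θ
      have h5 : 1/(L * (sfun q:ℝ)/2)^θ = (2:ℝ)^θ * L^(-θ) * ((sfun q:ℝ))^(-θ) := by
        rw [Real.div_rpow (by positivity) (by norm_num : (0:ℝ) ≤ 2),
          Real.mul_rpow hL0.le hsq.le,
          Real.rpow_neg hL0.le, Real.rpow_neg hsq.le]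
        field_simp
      rw [h5] at h4
      exact h4
    have htail : ∀ q ∈ F, ((sfun q : ℝ))^(-θ) ≤ (2:ℝ)^(θ+1) *
        ∑ t ∈ T, (if sfun q ≤ t then ((t:ℝ))^(-(θ+1)) else 0) := by
      intro q hq
      rw [hT]
      apply val_le_tail hθ0 ?_ (hFs q hq) ?_
      · have := hFs q hq; omega
      · have := hsm q; omega
    have hswap : ∑ q ∈ F, ∑ t ∈ T, (if sfun q ≤ t then ((t:ℝ))^(-(θ+1)) else 0)
        = ∑ t ∈ T, ∑ q ∈ F, (if sfun q ≤ t then ((t:ℝ))^(-(θ+1)) else 0) := Finset.sum_comm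
    have hinner : ∀ t ∈ T, (∑ q ∈ F, (if sfun q ≤ t then ((t:ℝ))^(-(θ+1)) else 0))
        ≤ (3:ℝ)^(k:ℕ) * ((t:ℝ))^(-p) := by
      intro t ht
      rw [hT, Finset.mem_Ico] at ht
      have ht1 : 1 ≤ t := by omega
      have ht0 : (0:ℝ) < (t:ℝ) := by exact_mod_cast ht1
      have htR : (1:ℝ) ≤ (t:ℝ) := by exact_mod_cast ht1
      have hcardF : (F.filter (fun q => sfun q ≤ t)).card ≤ (2*t+1)^k := by
        apply le_trans (Finset.card_le_card ?_) (hcount t)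
        intro q hq
        rw [Finset.mem_filter] at hq ⊢
        exact ⟨Finset.mem_univ _, hq.2⟩
      calc (∑ q ∈ F, (if sfun q ≤ t then ((t:ℝ))^(-(θ+1)) else 0))
          = ∑ q ∈ F.filter (fun q => sfun q ≤ t), ((t:ℝ))^(-(θ+1)) :=
            (Finset.sum_filter _ _).symm
        _ = (((F.filter (fun q => sfun q ≤ t)).card : ℕ) : ℝ) * ((t:ℝ))^(-(θ+1)) := by
            rw [Finset.sum_const, nsmul_eq_mul]
        _ ≤ (2*(t:ℝ)+1)^(k:ℕ) * ((t:ℝ))^(-(θ+1)) := by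
            apply mul_le_mul_of_nonneg_right ?_ (Real.rpow_nonneg ht0.le _)
            calc (((F.filter (fun q => sfun q ≤ t)).card : ℕ) : ℝ)
                ≤ (((2*t+1)^k : ℕ) : ℝ) := by exact_mod_cast hcardF
              _ = (2*(t:ℝ)+1)^(k:ℕ) := by push_cast; ring
        _ ≤ (3*(t:ℝ))^(k:ℕ) * ((t:ℝ))^(-(θ+1)) := by
            apply mul_le_mul_of_nonneg_right ?_ (Real.rpow_nonneg ht0.le _)
            apply pow_le_pow_left₀ (by positivity)
            linarith
        _ = (3:ℝ)^(k:ℕ) * ((t:ℝ))^(-p) := by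
            rw [mul_pow, mul_assoc]
            congr 1
            rw [← Real.rpow_natCast (t:ℝ) k, ← Real.rpow_add ht0]
            congr 1
            rw [hp]; ring
    have htsum : ∑ t ∈ T, ((t:ℝ))^(-p) ≤ (2:ℝ)^p/(p-1) * (((2*s1+1:ℕ)):ℝ)^(1-p) := by
      rw [hT]
      exact tail_sum hp1 _ _ (by omega)
    have hpk : p - 1 = θ - (k:ℝ) := by rw [hp]; ring
    have h1p : 1 - p ≤ 0 := by linarith
    have hppos : (0:ℝ) < p - 1 := by linarith
    have hcollect : (2:ℝ)^θ * L^(-θ) * (2:ℝ)^(θ+1) * (3:ℝ)^(k:ℕ) *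
        ((2:ℝ)^p/(p-1) * (((2*s1+1:ℕ)):ℝ)^(1-p))
        ≤ (2:ℝ)^(4*θ+2) * 3^(k:ℕ)/(θ-k) * G := by
      have hLt0 : (0:ℝ) < L^(-θ) := Real.rpow_pos_of_pos hL0 _
      have h2t : (0:ℝ) < (2:ℝ)^θ := Real.rpow_pos_of_pos (by norm_num) _
      have h2t1 : (0:ℝ) < (2:ℝ)^(θ+1) := Real.rpow_pos_of_pos (by norm_num) _
      have h2p : (0:ℝ) < (2:ℝ)^p := Real.rpow_pos_of_pos (by norm_num) _
      have h2p1 : (0:ℝ) < (2:ℝ)^(p-1) := Real.rpow_pos_of_pos (by norm_num) _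
      have h3k : (0:ℝ) < (3:ℝ)^(k:ℕ) := by positivity
      have ha : (((2*s1+1:ℕ)):ℝ)^(1-p) ≤ (d/L)^(1-p) := by
        apply Real.rpow_le_rpow_of_nonpos hdL0 ?_ h1p
        calc d/L ≤ (s1:ℝ) := hs1ge
          _ ≤ ((2*s1+1:ℕ):ℝ) := by
              push_cast
              have : (0:ℝ) ≤ (s1:ℝ) := by positivity
              linarith
      have hb : (d/L)^(1-p) = d^(1-p) / L^(1-p) := Real.div_rpow hd0.le hL0.le _
      have hc : L^(-θ) * (d^(1-p)/L^(1-p)) = d^(1-p) * L^(-(k:ℝ)) := by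
        have e1 : L^(-(k:ℝ)) = L^(-θ) / L^(1-p) := by
          rw [← Real.rpow_sub hL0]
          congr 1
          rw [hp]; ring
        rw [e1]; ring
      have hdd2 : d^(1-p) ≤ (2:ℝ)^(p-1) * D^(1-p) := by
        have h1 : D/2 ≤ d := by linarith
        have h2 : d^(1-p) ≤ (D/2)^(1-p) :=
          Real.rpow_le_rpow_of_nonpos (by positivity) h1 h1p
        have h3 : (D/2)^(1-p) = D^(1-p)/(2:ℝ)^(1-p) := Real.div_rpow hD0.le (by norm_num) _
        have h4 : ((2:ℝ))^(1-p) = ((2:ℝ)^(p-1))⁻¹ := by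
          rw [show (1:ℝ)-p = -(p-1) by ring, Real.rpow_neg (by norm_num)]
        rw [h3, h4, div_eq_mul_inv, inv_inv] at h2
        linarith [h2]
      have hG2 : D^(1-p) * L^(-(k:ℝ)) = G := by
        have e1 : (1:ℝ)-p = (k:ℝ) + (-θ) := by rw [hp]; ring
        rw [e1, Real.rpow_add hD0, Real.rpow_natCast, Real.rpow_neg hD0.le,
          Real.rpow_neg hL0.le, Real.rpow_natCast, hG]
        field_simp
      have hpow2 : (2:ℝ)^θ * (2:ℝ)^(θ+1) * (2:ℝ)^p * (2:ℝ)^(p-1) ≤ (2:ℝ)^(4*θ+2) := by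
        rw [← Real.rpow_add (by norm_num), ← Real.rpow_add (by norm_num),
          ← Real.rpow_add (by norm_num)]
        apply Real.rpow_le_rpow_of_exponent_le (by norm_num)
        rw [hp]; linarith
      have hDp : (0:ℝ) < D^(1-p) := Real.rpow_pos_of_pos hD0 _
      have hLkr : (0:ℝ) < L^(-(k:ℝ)) := Real.rpow_pos_of_pos hL0 _
      calc (2:ℝ)^θ * L^(-θ) * (2:ℝ)^(θ+1) * (3:ℝ)^(k:ℕ) *
          ((2:ℝ)^p/(p-1) * (((2*s1+1:ℕ)):ℝ)^(1-p))
          = ((2:ℝ)^θ * (2:ℝ)^(θ+1) * (2:ℝ)^p * (3:ℝ)^(k:ℕ)/(p-1)) *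
            (L^(-θ) * (((2*s1+1:ℕ)):ℝ)^(1-p)) := by ring
        _ ≤ ((2:ℝ)^θ * (2:ℝ)^(θ+1) * (2:ℝ)^p * (3:ℝ)^(k:ℕ)/(p-1)) *
            (L^(-θ) * (d/L)^(1-p)) := by
            apply mul_le_mul_of_nonneg_left ?_ (by positivity)
            exact mul_le_mul_of_nonneg_left ha hLt0.le
        _ = ((2:ℝ)^θ * (2:ℝ)^(θ+1) * (2:ℝ)^p * (3:ℝ)^(k:ℕ)/(p-1)) *
            (d^(1-p) * L^(-(k:ℝ))) := by rw [hb, hc]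
        _ ≤ ((2:ℝ)^θ * (2:ℝ)^(θ+1) * (2:ℝ)^p * (3:ℝ)^(k:ℕ)/(p-1)) *
            (((2:ℝ)^(p-1) * D^(1-p)) * L^(-(k:ℝ))) := by
            apply mul_le_mul_of_nonneg_left ?_ (by positivity)
            exact mul_le_mul_of_nonneg_right hdd2 hLkr.le
        _ = ((2:ℝ)^θ * (2:ℝ)^(θ+1) * (2:ℝ)^p * (2:ℝ)^(p-1)) * ((3:ℝ)^(k:ℕ)/(p-1)) *
            (D^(1-p) * L^(-(k:ℝ))) := by ring
        _ ≤ (2:ℝ)^(4*θ+2) * ((3:ℝ)^(k:ℕ)/(p-1)) * (D^(1-p) * L^(-(k:ℝ))) := by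
            apply mul_le_mul_of_nonneg_right ?_ (by positivity)
            exact mul_le_mul_of_nonneg_right hpow2 (by positivity)
        _ = (2:ℝ)^(4*θ+2) * 3^(k:ℕ)/(θ-k) * G := by
            rw [hG2, hpk]
            ring
    have hconst : (0:ℝ) ≤ (2:ℝ)^θ * L^(-θ) := by positivity
    have h2θp : (0:ℝ) < (2:ℝ)^(θ+1) := Real.rpow_pos_of_pos (by norm_num) _
    calc (∑ q ∈ F, 1/(1 + dist y (latticePt n k m L q))^θ)
        ≤ ∑ q ∈ F, (2:ℝ)^θ * L^(-θ) * ((sfun q : ℝ))^(-θ) := Finset.sum_le_sum hpt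
      _ = (2:ℝ)^θ * L^(-θ) * ∑ q ∈ F, ((sfun q : ℝ))^(-θ) := by rw [← Finset.mul_sum]
      _ ≤ (2:ℝ)^θ * L^(-θ) * ∑ q ∈ F, ((2:ℝ)^(θ+1) *
            ∑ t ∈ T, (if sfun q ≤ t then ((t:ℝ))^(-(θ+1)) else 0)) := by
          apply mul_le_mul_of_nonneg_left (Finset.sum_le_sum htail) hconst
      _ = (2:ℝ)^θ * L^(-θ) * ((2:ℝ)^(θ+1) *
            ∑ t ∈ T, ∑ q ∈ F, (if sfun q ≤ t then ((t:ℝ))^(-(θ+1)) else 0)) := by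
          rw [← Finset.mul_sum, hswap]
      _ ≤ (2:ℝ)^θ * L^(-θ) * ((2:ℝ)^(θ+1) * ∑ t ∈ T, (3:ℝ)^(k:ℕ) * ((t:ℝ))^(-p)) := by
          apply mul_le_mul_of_nonneg_left ?_ hconst
          exact mul_le_mul_of_nonneg_left (Finset.sum_le_sum hinner) h2θp.le
      _ = (2:ℝ)^θ * L^(-θ) * (2:ℝ)^(θ+1) * (3:ℝ)^(k:ℕ) * ∑ t ∈ T, ((t:ℝ))^(-p) := by
          rw [← Finset.mul_sum]; ring
      _ ≤ (2:ℝ)^θ * L^(-θ) * (2:ℝ)^(θ+1) * (3:ℝ)^(k:ℕ) *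
            ((2:ℝ)^p/(p-1) * (((2*s1+1:ℕ)):ℝ)^(1-p)) := by
          apply mul_le_mul_of_nonneg_left htsum (by positivity)
      _ ≤ (2:ℝ)^(4*θ+2) * 3^(k:ℕ)/(θ-k) * G := hcollect
  have hupper : (∑ qj : Fin k → Fin (m+1), 1/(1 + dist y (latticePt n k m L qj))^θ)
      ≤ Cu * G := by
    rw [← hsplit]
    calc _ ≤ (10:ℝ)^(k:ℕ) * G + (2:ℝ)^(4*θ+2) * 3^(k:ℕ)/(θ-k) * G :=
          add_le_add hnear hfar
      _ = Cu * G := by rw [hCu]; ring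
  constructor
  · calc 1 / (C * D^(θ - (k:ℝ)) * L^((k:ℕ):ℝ))
        = (1/(D^(θ - (k:ℝ)) * L^((k:ℕ):ℝ))) / C := by
          rw [mul_assoc, one_div, mul_inv, one_div]
          ring
      _ = G / C := by rw [hEG]
      _ ≤ G / Cl := by
          apply div_le_div_of_nonneg_left hG0.le hCl0
          rw [hC]; linarith
      _ ≤ _ := hlower
  · calc (∑ qj : Fin k → Fin (m+1), 1/(1 + dist y (latticePt n k m L qj))^θ)
        ≤ Cu * G := hupper
      _ ≤ C * G := by
          apply mul_le_mul_of_nonneg_right _ hG0.le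
          rw [hC]; linarith
      _ = C / (D^(θ - (k:ℝ)) * L^((k:ℕ):ℝ)) := by
          rw [div_eq_mul_one_div, hEG]
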